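/- arXiv:2505.11662 — 3 statements merged into one kernel-verified Lean document; each statement's English description precedes it below -/
import Mathlib

section
/- Let q ≥ 0, d ≥ 1, r ≥ 1 be integers. Let U_1 ⊆ ℂ^q and U_2 ⊆ ℂ^d be open sets with 0 ∈ U_2 and U_2 connected, and set V = U_1 × U_2. Let A_1, …, A_d be r×r complex-matrix-valued complex-analytic functions on V. Suppose f_1, f_2 : V → ℂ^r are complex-analytic and both satisfy ∂f/∂y_k = A_k · f on V for every 1 ≤ k ≤ d, and that f_1(x, 0) = f_2(x, 0) for every x ∈ U_1. Then f_1 = f_2 on V. -/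
open Set Metric in
lemma pfaffian_segment_aux {q d r : ℕ}
    {U₁ : Set (Fin q → ℂ)} {U₂ : Set (Fin d → ℂ)}
    {A : Fin d → ((Fin q → ℂ) × (Fin d → ℂ)) → Matrix (Fin r) (Fin r) ℂ}
    (hA : ∀ (k : Fin d) (a b : Fin r), AnalyticOnNhd ℂ (fun p => A k p a b) (U₁ ×ˢ U₂))
    {f₁ f₂ : ((Fin q → ℂ) × (Fin d → ℂ)) → (Fin r → ℂ)}
    (hf₁ : AnalyticOnNhd ℂ f₁ (U₁ ×ˢ U₂)) (hf₂ : AnalyticOnNhd ℂ f₂ (U₁ ×ˢ U₂))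
    (hpde₁ : ∀ k : Fin d, ∀ p ∈ U₁ ×ˢ U₂, ∀ a : Fin r,
      fderiv ℂ (fun p => f₁ p a) p (0, Pi.single k 1) = ∑ b, A k p a b * f₁ p b)
    (hpde₂ : ∀ k : Fin d, ∀ p ∈ U₁ ×ˢ U₂, ∀ a : Fin r,
      fderiv ℂ (fun p => f₂ p a) p (0, Pi.single k 1) = ∑ b, A k p a b * f₂ p b)
    {x : Fin q → ℂ} (hx : x ∈ U₁) {y₀ : Fin d → ℂ} {ε : ℝ}
    (hball : Metric.ball y₀ ε ⊆ U₂)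
    (heq : f₁ (x, y₀) = f₂ (x, y₀))
    {y : Fin d → ℂ} (hy : y ∈ Metric.ball y₀ ε) :
    f₁ (x, y) = f₂ (x, y) := by
  set w : Fin d → ℂ := y - y₀ with hw
  set γ : ℝ → (Fin d → ℂ) := fun t => y₀ + t • w with hγ
  have hγmem : ∀ t ∈ Set.Icc (0:ℝ) 1, γ t ∈ Metric.ball y₀ ε := by
    intro t ht
    have hd : dist (γ t) y₀ = ‖t • w‖ := by simp [γ, dist_eq_norm]
    rw [Metric.mem_ball, hd, norm_smul, Real.norm_eq_abs, abs_of_nonneg ht.1]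
    have hwy : ‖w‖ < ε := by
      have := Metric.mem_ball.mp hy; rwa [dist_eq_norm] at this
    calc t * ‖w‖ ≤ 1 * ‖w‖ := mul_le_mul_of_nonneg_right ht.2 (norm_nonneg _)
      _ = ‖w‖ := one_mul _
      _ < ε := hwy
  have hmem : ∀ t ∈ Set.Icc (0:ℝ) 1, ((x, γ t) : (Fin q → ℂ) × (Fin d → ℂ)) ∈ U₁ ×ˢ U₂ :=
    fun t ht => ⟨hx, hball (hγmem t ht)⟩
  have hcγ : Continuous γ := continuous_const.add (continuous_id.smul continuous_const)
  have hcc : Continuous (fun s : ℝ => ((x, γ s) : (Fin q → ℂ) × (Fin d → ℂ))) :=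
    continuous_const.prodMk hcγ
  set proj : ℝ → ℝ := fun t => min 1 (max 0 t) with hproj
  have hproj_mem : ∀ t, proj t ∈ Set.Icc (0:ℝ) 1 :=
    fun t => ⟨le_min zero_le_one (le_max_left 0 t), min_le_left _ _⟩
  have hproj_eq : ∀ t ∈ Set.Ico (0:ℝ) 1, proj t = t := by
    intro t ht
    simp [proj, max_eq_right ht.1, min_eq_right ht.2.le]
  set N : ℝ → Matrix (Fin r) (Fin r) ℂ :=
    fun t => Matrix.of fun a b => ∑ k, w k * A k (x, γ (proj t)) a b with hN
  set v : ℝ → (Fin r → ℂ) → (Fin r → ℂ) :=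
    fun t u => fun a => ∑ b, N t a b * u b with hv
  -- entry bound
  set F : ℝ → (Fin r × Fin r → ℂ) :=
    fun t => fun ab => ∑ k, w k * A k (x, γ t) ab.1 ab.2 with hF
  have hcontF : ContinuousOn F (Set.Icc (0:ℝ) 1) := by
    intro t ht
    apply ContinuousAt.continuousWithinAt
    apply continuousAt_pi.mpr
    intro ab
    have : ∀ k : Fin d, ContinuousAt (fun s : ℝ => A k (x, γ s) ab.1 ab.2) t := by
      intro k
      exact (hA k ab.1 ab.2 _ (hmem t ht)).continuousAt.tendsto.comp hcc.continuousAt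
    exact tendsto_finset_sum _ fun k _ => ((this k).const_smul (w k)).tendsto
  obtain ⟨C, hC⟩ := isCompact_Icc.exists_bound_of_continuousOn hcontF
  have hNbound : ∀ t (a b : Fin r), ‖N t a b‖ ≤ max C 0 := by
    intro t a b
    have h1 : N t a b = F (proj t) (a, b) := rfl
    rw [h1]
    exact le_trans (norm_le_pi_norm (F (proj t)) (a, b))
      (le_trans (hC _ (hproj_mem t)) (le_max_left _ _))
  set Kr : ℝ := (r : ℝ) * max C 0 with hKr
  have hKr0 : 0 ≤ Kr := by positivity
  have hlip : ∀ t, LipschitzWith (Real.toNNReal Kr) (v t) := by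
    intro t
    apply LipschitzWith.of_dist_le_mul
    intro u u'
    rw [dist_eq_norm, dist_eq_norm, Real.coe_toNNReal _ hKr0]
    apply (pi_norm_le_iff_of_nonneg (by positivity)).2
    intro a
    have he : (v t u - v t u') a = ∑ b, N t a b * (u b - u' b) := by
      simp only [Pi.sub_apply, v, ← Finset.sum_sub_distrib, mul_sub]
    rw [he]
    calc ‖∑ b, N t a b * (u b - u' b)‖ ≤ ∑ b, ‖N t a b * (u b - u' b)‖ :=
          norm_sum_le _ _
      _ ≤ ∑ _b : Fin r, max C 0 * ‖u - u'‖ := by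
          apply Finset.sum_le_sum
          intro b _
          rw [norm_mul]
          exact mul_le_mul (hNbound t a b) (norm_le_pi_norm (u - u') b)
            (norm_nonneg _) (le_max_right _ _)
      _ = Kr * ‖u - u'‖ := by
          rw [Finset.sum_const, Finset.card_univ, Fintype.card_fin, nsmul_eq_mul, hKr,
            mul_assoc]
  -- derivative of solutions along the segment
  have hderiv : ∀ f : ((Fin q → ℂ) × (Fin d → ℂ)) → (Fin r → ℂ),
      AnalyticOnNhd ℂ f (U₁ ×ˢ U₂) →
      (∀ k : Fin d, ∀ p ∈ U₁ ×ˢ U₂, ∀ a : Fin r,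
        fderiv ℂ (fun p => f p a) p (0, Pi.single k 1) = ∑ b, A k p a b * f p b) →
      ∀ t ∈ Set.Ico (0:ℝ) 1,
        HasDerivAt (fun s => f (x, γ s)) (v t (f (x, γ t))) t := by
    intro f hf hpde t ht
    have hpmem : ((x, γ t) : (Fin q → ℂ) × (Fin d → ℂ)) ∈ U₁ ×ˢ U₂ :=
      hmem t (Set.Ico_subset_Icc_self ht)
    have hcγ' : HasDerivAt γ w t := by
      simpa [γ] using ((hasDerivAt_id t).smul_const w).const_add y₀
    have hc : HasDerivAt (fun s : ℝ => ((x, γ s) : (Fin q → ℂ) × (Fin d → ℂ)))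
        ((0 : Fin q → ℂ), w) t :=
      (hasDerivAt_const t x).prodMk hcγ'
    rw [hasDerivAt_pi]
    intro a
    have hfa : AnalyticAt ℂ (fun p => f p a) (x, γ t) :=
      analyticAt_pi_iff.mp (hf _ hpmem) a
    have hfd := (hfa.differentiableAt.hasFDerivAt.restrictScalars ℝ).comp_hasDerivAt t hc
    have h0w : (((0 : Fin q → ℂ), w) : (Fin q → ℂ) × (Fin d → ℂ)) =
        ∑ k, w k • (((0 : Fin q → ℂ), Pi.single k 1) : (Fin q → ℂ) × (Fin d → ℂ)) := by
      rw [Prod.ext_iff]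
      constructor
      · simp [Prod.fst_sum]
      · simp only [Prod.snd_sum, Prod.smul_mk, smul_zero]
        funext j
        simp [Finset.sum_apply, Pi.single_apply]
    convert hfd using 1
    show v t (f (x, γ t)) a = _
    rw [ContinuousLinearMap.coe_restrictScalars', h0w, map_sum]
    simp only [map_smul, smul_eq_mul]
    have hk : ∀ k : Fin d,
        (fderiv ℂ (fun p => f p a) (x, γ t)) ((0 : Fin q → ℂ), Pi.single k 1) =
          ∑ b, A k (x, γ t) a b * f (x, γ t) b := fun k => hpde k _ hpmem a
    calc v t (f (x, γ t)) a
        = ∑ b, (∑ k, w k * A k (x, γ t) a b) * f (x, γ t) b := by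
          simp only [v, N, hproj_eq t ht, Matrix.of_apply]
      _ = ∑ k, w k * ∑ b, A k (x, γ t) a b * f (x, γ t) b := by
          simp only [Finset.sum_mul]
          rw [Finset.sum_comm]
          congr 1; funext k
          rw [Finset.mul_sum]
          congr 1; funext b
          ring
      _ = _ := by
          congr 1; funext k
          rw [hk k]
    rfl
  -- apply ODE uniqueness
  have hcontf : ∀ f : ((Fin q → ℂ) × (Fin d → ℂ)) → (Fin r → ℂ),
      AnalyticOnNhd ℂ f (U₁ ×ˢ U₂) →
      ContinuousOn (fun s => f (x, γ s)) (Set.Icc (0:ℝ) 1) := by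
    intro f hf t ht
    exact ContinuousAt.continuousWithinAt
      ((hf _ (hmem t ht)).continuousAt.tendsto.comp hcc.continuousAt)
  have huniq : Set.EqOn (fun s => f₁ (x, γ s)) (fun s => f₂ (x, γ s)) (Set.Icc 0 1) := by
    apply ODE_solution_unique_of_mem_Icc_right
      (fun t _ => (hlip t).lipschitzOnWith (s := Set.univ))
      (hcontf f₁ hf₁)
      (fun t ht => (hderiv f₁ hf₁ hpde₁ t ht).hasDerivWithinAt)
      (fun t _ => Set.mem_univ _)
      (hcontf f₂ hf₂)
      (fun t ht => (hderiv f₂ hf₂ hpde₂ t ht).hasDerivWithinAt)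
      (fun t _ => Set.mem_univ _)
    show f₁ (x, γ 0) = f₂ (x, γ 0)
    have : γ 0 = y₀ := by simp [γ]
    rw [this]; exact heq
  have h1 := huniq (Set.right_mem_Icc.mpr zero_le_one)
  have hγ1 : γ 1 = y := by simp [γ, hw]
  simpa [hγ1] using h1


/-- Uniqueness of analytic solutions of a linear Pfaffian system with parameters:
two solutions of `∂f/∂y_k = A_k · f` on `U₁ × U₂` agreeing at `y = 0` coincide. -/
theorem pfaffian_system_uniqueness (q d r : ℕ) (hd : 1 ≤ d) (hr : 1 ≤ r)
    (U₁ : Set (Fin q → ℂ)) (U₂ : Set (Fin d → ℂ))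
    (hU₁ : IsOpen U₁) (hU₂ : IsOpen U₂)
    (h02 : (0 : Fin d → ℂ) ∈ U₂) (hconn : IsConnected U₂)
    (A : Fin d → ((Fin q → ℂ) × (Fin d → ℂ)) → Matrix (Fin r) (Fin r) ℂ)
    (hA : ∀ (k : Fin d) (a b : Fin r), AnalyticOnNhd ℂ (fun p => A k p a b) (U₁ ×ˢ U₂))
    (f₁ f₂ : ((Fin q → ℂ) × (Fin d → ℂ)) → (Fin r → ℂ))
    (hf₁ : AnalyticOnNhd ℂ f₁ (U₁ ×ˢ U₂)) (hf₂ : AnalyticOnNhd ℂ f₂ (U₁ ×ˢ U₂))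
    (hpde₁ : ∀ k : Fin d, ∀ p ∈ U₁ ×ˢ U₂, ∀ a : Fin r,
      fderiv ℂ (fun p => f₁ p a) p (0, Pi.single k 1) = ∑ b, A k p a b * f₁ p b)
    (hpde₂ : ∀ k : Fin d, ∀ p ∈ U₁ ×ˢ U₂, ∀ a : Fin r,
      fderiv ℂ (fun p => f₂ p a) p (0, Pi.single k 1) = ∑ b, A k p a b * f₂ p b)
    (hinit : ∀ x ∈ U₁, f₁ (x, 0) = f₂ (x, 0)) :
    Set.EqOn f₁ f₂ (U₁ ×ˢ U₂) := by
  rintro ⟨x, y⟩ ⟨hx, hy⟩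
  set S : Set (Fin d → ℂ) := {y | y ∈ U₂ ∧ f₁ (x, y) = f₂ (x, y)} with hS
  have hSsub : S ⊆ U₂ := fun z hz => hz.1
  have hSopen : IsOpen S := by
    rw [Metric.isOpen_iff]
    rintro y₀ ⟨hy₀, heq⟩
    obtain ⟨ε, hε, hball⟩ := Metric.isOpen_iff.mp hU₂ y₀ hy₀
    exact ⟨ε, hε, fun z hz => ⟨hball hz,
      pfaffian_segment_aux hA hf₁ hf₂ hpde₁ hpde₂ hx hball heq hz⟩⟩
  have hcontOn : ∀ f : ((Fin q → ℂ) × (Fin d → ℂ)) → (Fin r → ℂ),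
      AnalyticOnNhd ℂ f (U₁ ×ˢ U₂) → ContinuousOn (fun z => f (x, z)) U₂ := by
    intro f hf z hz
    exact ContinuousAt.continuousWithinAt
      ((hf (x, z) ⟨hx, hz⟩).continuousAt.tendsto.comp
        (continuous_const.prodMk continuous_id).continuousAt)
  have hcl : closure S ∩ U₂ ⊆ S := by
    rintro z ⟨hzc, hzU⟩
    refine ⟨hzU, ?_⟩
    have heqS : Set.EqOn (fun z => f₁ (x, z)) (fun z => f₂ (x, z)) S := fun z hz => hz.2
    have := heqS.of_subset_closure
      ((hcontOn f₁ hf₁).mono Set.inter_subset_right)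
      ((hcontOn f₂ hf₂).mono Set.inter_subset_right)
      (Set.subset_inter subset_closure hSsub) Set.inter_subset_left
    exact this ⟨hzc, hzU⟩
  have hU2S : U₂ ⊆ S :=
    hconn.isPreconnected.subset_of_closure_inter_subset hSopen
      ⟨0, h02, ⟨h02, hinit x hx⟩⟩ hcl
  exact (hU2S hy).2
end

section
/- Let U ⊆ ℂ be open, and let a, b : U → ℂ be complex-analytic. Let f_1, f_2 : U → ℂ be complex-analytic solutions of the second-order linear differential equation f'' + a·f' + b·f = 0 on U. Let z ∈ U be a point with f_2(z) ≠ 0 and with nonvanishing Wronskian f_1'(z)·f_2(z) − f_1(z)·f_2'(z) ≠ 0. Then the Schwarzian derivative of the quotient φ = f_1/f_2 (defined and holomorphic on a neighborhood of z) satisfies Θ(φ)(z) = b(z)/3 − (a(z)² + 2·a'(z))/12. -/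
/-- The Schwarzian derivative (in Deligne's normalization
`Θ(φ) = (φ'·(φ'''/6) − (φ''/2)²)/(φ')²`) of the ratio of two solutions of
`f'' + a·f' + b·f = 0` equals `b/3 − (a² + 2a')/12`. -/
theorem schwarzian_of_ratio_of_solutions (U : Set ℂ) (hU : IsOpen U)
    (a b f₁ f₂ : ℂ → ℂ)
    (ha : AnalyticOnNhd ℂ a U) (hb : AnalyticOnNhd ℂ b U)
    (hf₁ : AnalyticOnNhd ℂ f₁ U) (hf₂ : AnalyticOnNhd ℂ f₂ U)
    (hode₁ : ∀ w ∈ U, deriv (deriv f₁) w + a w * deriv f₁ w + b w * f₁ w = 0)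
    (hode₂ : ∀ w ∈ U, deriv (deriv f₂) w + a w * deriv f₂ w + b w * f₂ w = 0)
    (z : ℂ) (hz : z ∈ U) (hf₂z : f₂ z ≠ 0)
    (hW : deriv f₁ z * f₂ z - f₁ z * deriv f₂ z ≠ 0) :
    (deriv (fun w => f₁ w / f₂ w) z * (deriv (deriv (deriv (fun w => f₁ w / f₂ w))) z / 6)
        - (deriv (deriv (fun w => f₁ w / f₂ w)) z / 2) ^ 2)
      / (deriv (fun w => f₁ w / f₂ w) z) ^ 2
      = b z / 3 - (a z ^ 2 + 2 * deriv a z) / 12 := by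
  have hf₁' : AnalyticOnNhd ℂ (deriv f₁) U := hf₁.deriv
  have hf₂' : AnalyticOnNhd ℂ (deriv f₂) U := hf₂.deriv
  set φ : ℂ → ℂ := fun w => f₁ w / f₂ w with hφdef
  set W : ℂ → ℂ := fun w => deriv f₁ w * f₂ w - f₁ w * deriv f₂ w with hWdef
  have hWa : AnalyticOnNhd ℂ W U := (hf₁'.mul hf₂).sub (hf₁.mul hf₂')
  -- the set where f₂ ≠ 0
  set V : Set ℂ := {w | w ∈ U ∧ f₂ w ≠ 0} with hVdef
  have hVopen : IsOpen V := by
    rw [isOpen_iff_mem_nhds]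
    rintro w ⟨hwU, hwf⟩
    filter_upwards [hU.mem_nhds hwU, (hf₂ w hwU).continuousAt.eventually_ne hwf] with u h1 h2
      using ⟨h1, h2⟩
  have hzV : z ∈ V := ⟨hz, hf₂z⟩
  -- W' = -a W
  have hW' : ∀ w ∈ U, deriv W w = -(a w) * W w := by
    intro w hw
    have H : HasDerivAt W
        ((deriv (deriv f₁) w * f₂ w + deriv f₁ w * deriv f₂ w)
          - (deriv f₁ w * deriv f₂ w + f₁ w * deriv (deriv f₂) w)) w :=
      (((hf₁' w hw).differentiableAt.hasDerivAt.mul (hf₂ w hw).differentiableAt.hasDerivAt).sub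
        ((hf₁ w hw).differentiableAt.hasDerivAt.mul (hf₂' w hw).differentiableAt.hasDerivAt))
    rw [H.deriv]
    have h1 := hode₁ w hw
    have h2 := hode₂ w hw
    simp only [hWdef]
    linear_combination f₂ w * h1 - f₁ w * h2
  -- first derivative of φ
  have hD1 : ∀ w ∈ V, deriv φ w = W w / f₂ w ^ 2 := by
    rintro w ⟨hwU, hwf⟩
    have H : HasDerivAt φ ((deriv f₁ w * f₂ w - f₁ w * deriv f₂ w) / f₂ w ^ 2) w :=
      (hf₁ w hwU).differentiableAt.hasDerivAt.div (hf₂ w hwU).differentiableAt.hasDerivAt hwf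
    rw [H.deriv]
  -- second derivative of φ
  have hD2 : ∀ w ∈ V, deriv (deriv φ) w = (-(a w) * f₂ w - 2 * deriv f₂ w) * W w / f₂ w ^ 3 := by
    rintro w ⟨hwU, hwf⟩
    have H : HasDerivAt (fun u => W u / f₂ u ^ 2)
        ((deriv W w * f₂ w ^ 2 - W w * (2 * f₂ w ^ 1 * deriv f₂ w)) / (f₂ w ^ 2) ^ 2) w :=
      (hWa w hwU).differentiableAt.hasDerivAt.div
        ((hf₂ w hwU).differentiableAt.hasDerivAt.pow 2) (pow_ne_zero 2 hwf)
    have H2 : HasDerivAt (deriv φ)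
        ((deriv W w * f₂ w ^ 2 - W w * (2 * f₂ w ^ 1 * deriv f₂ w)) / (f₂ w ^ 2) ^ 2) w := by
      apply H.congr_of_eventuallyEq
      filter_upwards [hVopen.mem_nhds ⟨hwU, hwf⟩] with u hu using hD1 u hu
    rw [H2.deriv, hW' w hwU]
    field_simp
  -- third derivative of φ at z
  have hD3 : deriv (deriv (deriv φ)) z =
      (((-(deriv a z) * f₂ z + -(a z) * deriv f₂ z - 2 * deriv (deriv f₂) z) * W z
          + (-(a z) * f₂ z - 2 * deriv f₂ z) * (-(a z) * W z)) * f₂ z ^ 3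
        - (-(a z) * f₂ z - 2 * deriv f₂ z) * W z * (3 * f₂ z ^ 2 * deriv f₂ z))
        / (f₂ z ^ 3) ^ 2 := by
    have Ha := (ha z hz).differentiableAt.hasDerivAt
    have H2 := (hf₂ z hz).differentiableAt.hasDerivAt
    have H2' := (hf₂' z hz).differentiableAt.hasDerivAt
    have HW := (hWa z hz).differentiableAt.hasDerivAt
    have HWv : HasDerivAt W (-(a z) * W z) z := by rw [← hW' z hz]; exact HW
    have h1 : HasDerivAt (fun u => -(a u) * f₂ u - 2 * deriv f₂ u)
        (-(deriv a z) * f₂ z + -(a z) * deriv f₂ z - 2 * deriv (deriv f₂) z) z :=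
      (Ha.neg.mul H2).sub (H2'.const_mul 2)
    have h2 : HasDerivAt (fun u => (-(a u) * f₂ u - 2 * deriv f₂ u) * W u)
        ((-(deriv a z) * f₂ z + -(a z) * deriv f₂ z - 2 * deriv (deriv f₂) z) * W z
          + (-(a z) * f₂ z - 2 * deriv f₂ z) * (-(a z) * W z)) z := h1.mul HWv
    have h3 : HasDerivAt (fun u => f₂ u ^ 3) (3 * f₂ z ^ 2 * deriv f₂ z) z := by
      have h := H2.pow 3
      norm_num at h
      exact h
    have H : HasDerivAt (fun u => (-(a u) * f₂ u - 2 * deriv f₂ u) * W u / f₂ u ^ 3)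
        ((((-(deriv a z) * f₂ z + -(a z) * deriv f₂ z - 2 * deriv (deriv f₂) z) * W z
          + (-(a z) * f₂ z - 2 * deriv f₂ z) * (-(a z) * W z)) * f₂ z ^ 3
          - (-(a z) * f₂ z - 2 * deriv f₂ z) * W z * (3 * f₂ z ^ 2 * deriv f₂ z))
          / (f₂ z ^ 3) ^ 2) z := h2.div h3 (pow_ne_zero 3 hf₂z)
    have H3 : HasDerivAt (deriv (deriv φ))
        ((((-(deriv a z) * f₂ z + -(a z) * deriv f₂ z - 2 * deriv (deriv f₂) z) * W z
          + (-(a z) * f₂ z - 2 * deriv f₂ z) * (-(a z) * W z)) * f₂ z ^ 3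
          - (-(a z) * f₂ z - 2 * deriv f₂ z) * W z * (3 * f₂ z ^ 2 * deriv f₂ z))
          / (f₂ z ^ 3) ^ 2) z := by
      apply H.congr_of_eventuallyEq
      filter_upwards [hVopen.mem_nhds hzV] with u hu using hD2 u hu
    rw [H3.deriv]
  -- wrap up
  have hWz : W z ≠ 0 := hW
  have h2'' : deriv (deriv f₂) z = -(a z * deriv f₂ z + b z * f₂ z) := by
    linear_combination hode₂ z hz
  rw [hD1 z hzV, hD2 z hzV, hD3, h2'']
  clear_value φ W V
  rw [div_eq_iff (pow_ne_zero 2 (div_ne_zero hWz (pow_ne_zero 2 hf₂z))), div_pow (W z)]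
  field_simp
  ring
end

section
/- For every n ≥ 1 there exist a vector Z ∈ ℂ^n and an n×n complex matrix W such that the only pair (A, B), with A an invertible n×n complex matrix and B ∈ ℂ^n, satisfying both A·Z = Z and (Aᵀ)⁻¹ · W · Aᵀ − (Bᵀ·Z) · Id − (Aᵀ)⁻¹ · B · (A·Z)ᵀ = W, is A = Id and B = 0. -/
open Matrix

lemma key_isotropy (n : ℕ) (hn : 1 ≤ n) (m : ℕ → ℕ → ℂ) (b : ℕ → ℂ) (c : ℂ)
    (hzr : ∀ i j, n ≤ i → m i j = 0)
    (hzc : ∀ i j, n ≤ j → m i j = 0)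
    (h0 : ∀ j, m 0 j = if j = 0 then 1 else 0)
    (hrec : ∀ i j, i < n → j < n →
      m (i+1) j = (if j = 0 then b i else m i (j-1)) + c * m i j)
    (hc : c = b 0) :
    c = 0 ∧ (∀ i, i < n → b i = 0) ∧
      (∀ i j, i < n → j < n → m i j = if i = j then 1 else 0) := by
  have L1 : ∀ i j, i < j → m i j = 0 := by
    intro i
    induction i with
    | zero => intro j hj; rw [h0, if_neg (by omega)]
    | succ i ih =>
      intro j hj
      by_cases hi : i + 1 < n
      · by_cases hjn : j < n
        · rw [hrec i j (by omega) hjn, ih j (by omega), ih (j-1) (by omega),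
            if_neg (by omega)]
          ring
        · exact hzc _ _ (by omega)
      · exact hzr _ _ (by omega)
  have L2 : ∀ i, i < n → m i i = 1 := by
    intro i
    induction i with
    | zero => intro _; rw [h0, if_pos rfl]
    | succ i ih =>
      intro h
      rw [hrec i (i+1) (by omega) h, if_neg (by omega), L1 i (i+1) (by omega),
        Nat.add_sub_cancel, ih (by omega)]
      ring
  have L3 : ∀ i, 1 ≤ i → i < n → m i (i-1) = i * c + b 0 := by
    intro i
    induction i with
    | zero => omega
    | succ i ih =>
      intro _ h
      rcases Nat.eq_zero_or_pos i with h1 | h1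
      · subst h1
        rw [Nat.add_sub_cancel, hrec 0 0 (by omega) (by omega), if_pos rfl,
          h0 0, if_pos rfl]
        push_cast; ring
      · rw [Nat.add_sub_cancel, hrec i i (by omega) (by omega), if_neg (by omega),
          ih h1 (by omega), L2 i (by omega)]
        push_cast; ring
  have hc0 : c = 0 := by
    rcases eq_or_lt_of_le hn with h1 | h1
    · -- n = 1
      have h := hrec 0 0 (by omega) (by omega)
      rw [hzr 1 0 (by omega), h0 0, if_pos rfl, if_pos rfl] at h
      linear_combination (hc - h) / 2
    · -- 2 ≤ n
      have h := hrec (n-1) (n-1) (by omega) (by omega)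
      rw [show n - 1 + 1 = n from by omega, hzr n (n-1) le_rfl,
        if_neg (by omega), L3 (n-1) (by omega) (by omega),
        L2 (n-1) (by omega)] at h
      have hcast : ((n - 1 : ℕ) : ℂ) = (n : ℂ) - 1 := by
        rw [Nat.cast_sub hn]; simp
      rw [hcast] at h
      have h2 : ((n : ℂ) + 1) * c = 0 := by linear_combination -h + hc
      have hnz : ((n : ℂ) + 1) ≠ 0 := by
        have : ((n + 1 : ℕ) : ℂ) ≠ 0 := Nat.cast_ne_zero.mpr (by omega)
        push_cast at this; exact this
      exact (mul_eq_zero.mp h2).resolve_left hnz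
  have L4 : ∀ i, i < n → ∀ j,
      m i j = if j = i then 1 else if j < i then b (i-1-j) else 0 := by
    intro i
    induction i with
    | zero =>
      intro _ j
      rw [h0]
      by_cases h : j = 0 <;> simp [h]
    | succ i ih =>
      intro h j
      by_cases hjn : j < n
      · rw [hrec i j (by omega) hjn, hc0, zero_mul, add_zero]
        by_cases hj0 : j = 0
        · subst hj0
          rw [if_pos rfl, if_neg (by omega), if_pos (by omega)]
          congr 1
        · rw [if_neg hj0, ih (by omega) (j-1)]
          by_cases h1 : j - 1 = i
          · rw [if_pos h1, if_pos (by omega)]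
          · rw [if_neg h1, if_neg (by omega : ¬ j = i + 1)]
            by_cases h2 : j - 1 < i
            · rw [if_pos h2, if_pos (by omega),
                show i - 1 - (j-1) = i + 1 - 1 - j from by omega]
            · rw [if_neg h2, if_neg (by omega)]
      · rw [hzc _ _ (by omega), if_neg (by omega), if_neg (by omega)]
  have hb : ∀ l, l < n → b l = 0 := by
    intro l hl
    by_cases hl1 : l = n - 1
    · have h := hrec (n-1) 0 (by omega) (by omega)
      rw [show n - 1 + 1 = n from by omega, hzr n 0 le_rfl, if_pos rfl,
        hc0, zero_mul, add_zero] at h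
      rw [hl1]; exact h.symm
    · have h := hrec (n-1) (n-1-l) (by omega) (by omega)
      rw [show n - 1 + 1 = n from by omega, hzr n _ le_rfl, if_neg (by omega),
        hc0, zero_mul, add_zero, L4 (n-1) (by omega) (n-1-l-1),
        if_neg (by omega), if_pos (by omega),
        show n - 1 - 1 - (n-1-l-1) = l from by omega] at h
      exact h.symm
  refine ⟨hc0, hb, fun i j hi hj => ?_⟩
  rw [L4 i hi j]
  by_cases h : j = i
  · simp [h]
  · have hij : (if i = j then (1:ℂ) else 0) = 0 := if_neg (fun hh => h hh.symm)
    rw [if_neg h, hij]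
    by_cases h2 : j < i
    · rw [if_pos h2, hb _ (by omega)]
    · rw [if_neg h2]

/-- Trivial-isotropy lemma in coordinates: there is a point `(Z, W)` of the fiber of
the second prolongation of `ℙⁿ` whose isotropy group is trivial, i.e. the only pair
`(A, B)` with `A` invertible satisfying `A·Z = Z` and
`(Aᵀ)⁻¹·W·Aᵀ − (Bᵀ·Z)·Id − (Aᵀ)⁻¹·B·(A·Z)ᵀ = W` is `(Id, 0)`. -/
theorem exists_point_with_trivial_isotropy (n : ℕ) (hn : 1 ≤ n) :
    ∃ (Z : Fin n → ℂ) (W : Matrix (Fin n) (Fin n) ℂ),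
      ∀ (A : Matrix (Fin n) (Fin n) ℂ) (B : Fin n → ℂ),
        IsUnit A.det →
        A.mulVec Z = Z →
        Aᵀ⁻¹ * W * Aᵀ - (B ⬝ᵥ Z) • (1 : Matrix (Fin n) (Fin n) ℂ)
            - Aᵀ⁻¹ * vecMulVec B (A.mulVec Z) = W →
        A = 1 ∧ B = 0 := by
  haveI : NeZero n := ⟨by omega⟩
  set Z0 : Fin n → ℂ := fun i => if i = 0 then 1 else 0 with hZ0def
  set W0 : Matrix (Fin n) (Fin n) ℂ :=
    Matrix.of fun i j => if (j : ℕ) = (i : ℕ) + 1 then 1 else 0 with hW0def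
  refine ⟨Z0, W0, ?_⟩
  intro A B hdet hAZ heq
  rw [hAZ] at heq
  set c : ℂ := B ⬝ᵥ Z0 with hcdef
  set M : Matrix (Fin n) (Fin n) ℂ := Aᵀ with hMdef
  have hdetM : IsUnit M.det := by rw [hMdef, Matrix.det_transpose]; exact hdet
  have h1 : M * M⁻¹ = 1 := Matrix.mul_nonsing_inv M hdetM
  -- matrix-level equation
  have hE : W0 * M = M * W0 + c • M + vecMulVec B Z0 := by
    have h2 := congrArg (fun X => M * X) heq
    simp only [Matrix.mul_sub, ← Matrix.mul_assoc, h1, Matrix.one_mul,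
      Matrix.mul_smul, Matrix.mul_one] at h2
    rw [sub_sub, sub_eq_iff_eq_add] at h2
    rw [h2]; abel
  -- row zero of M
  have hM0 : ∀ j : Fin n, M 0 j = if (j : ℕ) = 0 then 1 else 0 := by
    intro j
    have h := congrFun hAZ j
    have hmv : A.mulVec Z0 j = A j 0 := by
      simp [Matrix.mulVec, dotProduct, hZ0def, mul_ite]
    rw [hmv] at h
    rw [hMdef, Matrix.transpose_apply, h, hZ0def]
    simp only [Fin.val_eq_zero_iff]
  -- entrywise sums
  have hsumL : ∀ (i : ℕ) (j : Fin n),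
      (∑ k : Fin n, (if (k : ℕ) = i + 1 then (1:ℂ) else 0) * M k j)
        = if h : i + 1 < n then M ⟨i+1, h⟩ j else 0 := by
    intro i j
    by_cases h : i + 1 < n
    · rw [dif_pos h, Finset.sum_eq_single (⟨i+1, h⟩ : Fin n)]
      · rw [if_pos rfl, one_mul]
      · intro k _ hk
        rw [if_neg (fun hh => hk (Fin.ext hh)), zero_mul]
      · intro hk; exact absurd (Finset.mem_univ _) hk
    · rw [dif_neg h, Finset.sum_eq_zero]
      intro k _
      rw [if_neg (by omega : ¬ (k : ℕ) = i + 1), zero_mul]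
  have hsumR : ∀ (i : Fin n) (j : ℕ) (hj : j < n),
      (∑ k : Fin n, M i k * (if j = (k : ℕ) + 1 then (1:ℂ) else 0))
        = if h : 1 ≤ j then M i ⟨j - 1, by omega⟩ else 0 := by
    intro i j hj
    by_cases h : 1 ≤ j
    · rw [dif_pos h, Finset.sum_eq_single (⟨j - 1, by omega⟩ : Fin n)]
      · rw [if_pos (show j = ((⟨j - 1, by omega⟩ : Fin n) : ℕ) + 1 by
          simp only [Fin.val_mk]; omega), mul_one]
      · intro k _ hk
        rw [if_neg (fun hh => hk (Fin.ext (by simp only [Fin.val_mk]; omega))), mul_zero]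
      · intro hk; exact absurd (Finset.mem_univ _) hk
    · rw [dif_neg h, Finset.sum_eq_zero]
      intro k _
      rw [if_neg (by omega : ¬ j = (k : ℕ) + 1), mul_zero]
  -- instantiate key lemma
  obtain ⟨hc0, hb, hm1⟩ := key_isotropy n hn
    (fun i j => if h : i < n ∧ j < n then M ⟨i, h.1⟩ ⟨j, h.2⟩ else 0)
    (fun i => if h : i < n then B ⟨i, h⟩ else 0) c
    (fun i j h => dif_neg (by omega))
    (fun i j h => dif_neg (by omega))
    (by
      intro j
      beta_reduce
      by_cases hj : j < n
      · rw [dif_pos (⟨by omega, hj⟩ : (0:ℕ) < n ∧ j < n)]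
        have h := hM0 ⟨j, hj⟩
        rw [show (⟨0, (⟨by omega, hj⟩ : (0:ℕ) < n ∧ j < n).1⟩ : Fin n) = 0 from
          Fin.ext (by simp)]
        exact h
      · rw [dif_neg (by omega), if_neg (by omega)])
    (by
      intro i j hi hj
      beta_reduce
      have hij := congrFun (congrFun hE ⟨i, hi⟩) ⟨j, hj⟩
      simp only [Matrix.add_apply, Matrix.smul_apply, Matrix.vecMulVec_apply,
        Matrix.mul_apply, hW0def, Matrix.of_apply, smul_eq_mul, hZ0def] at hij
      rw [hsumL i ⟨j, hj⟩, hsumR ⟨i, hi⟩ j hj] at hij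
      by_cases hj0 : j = 0
      · subst hj0
        rw [if_pos (show (⟨0, hj⟩ : Fin n) = 0 from Fin.ext (by simp)), mul_one,
          dif_neg (by omega : ¬ (1:ℕ) ≤ 0)] at hij
        rw [if_pos rfl, dif_pos hi]
        by_cases h : i + 1 < n
        · rw [dif_pos h] at hij
          rw [dif_pos (⟨h, hj⟩ : i + 1 < n ∧ 0 < n),
            dif_pos (⟨hi, hj⟩ : i < n ∧ 0 < n)]
          rw [hij]; ring
        · rw [dif_neg h] at hij
          rw [dif_neg (fun hc : i + 1 < n ∧ 0 < n => h hc.1),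
            dif_pos (⟨hi, hj⟩ : i < n ∧ 0 < n)]
          rw [hij]; ring
      · rw [if_neg (show ¬ (⟨j, hj⟩ : Fin n) = 0 from fun hh => hj0 (by
            simpa using congrArg Fin.val hh)), mul_zero, add_zero,
          dif_pos (by omega : 1 ≤ j)] at hij
        rw [if_neg hj0, dif_pos (⟨hi, by omega⟩ : i < n ∧ j - 1 < n),
          dif_pos (⟨hi, hj⟩ : i < n ∧ j < n)]
        by_cases h : i + 1 < n
        · rw [dif_pos h] at hij
          rw [dif_pos (⟨h, hj⟩ : i + 1 < n ∧ j < n)]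
          exact hij
        · rw [dif_neg h] at hij
          rw [dif_neg (fun hc : i + 1 < n ∧ j < n => h hc.1)]
          exact hij)
    (by
      beta_reduce
      rw [dif_pos (by omega : (0:ℕ) < n), hcdef, hZ0def]
      simp only [dotProduct, mul_ite, mul_one, mul_zero]
      simp)
  constructor
  · have hM1 : M = 1 := by
      ext i j
      have h := hm1 i.val j.val i.isLt j.isLt
      rw [dif_pos (⟨i.isLt, j.isLt⟩ : (i:ℕ) < n ∧ (j:ℕ) < n)] at h
      simp only [Fin.eta] at h
      rw [h, Matrix.one_apply]
      by_cases hh : i = j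
      · rw [if_pos (by rw [hh]), if_pos hh]
      · rw [if_neg (fun hhh => hh (Fin.ext hhh)), if_neg hh]
    have h := congrArg Matrix.transpose hM1
    rwa [hMdef, Matrix.transpose_transpose, Matrix.transpose_one] at h
  · funext i
    have h := hb i.val i.isLt
    rw [dif_pos i.isLt] at h
    simpa using h
end
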